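/- Let p = 3/4, so each ξ_j takes the value 1/√3 with probability 3/4 and the value −√3 with probability 1/4. Then for every n ≥ 1 and every λ ∈ ℝ^n with ∑_{j=1}^n λ_j² = 1 and max_{1≤k≤n} λ_k² ≥ 0.99, one has 𝔼| ∑_{j=1}^n λ_j ξ_j | ≤ 2√((1−p)p) + √(1 − max_k λ_k²) ≤ √3/2 + 1/10 < 0.97. -/
import Mathlib


/-- The value of the random variable `ξ_j` associated with `p`: it takes the value
`√((1−p)/p)` (encoded by `true`) and `−√(p/(1−p))` (encoded by `false`). -/
noncomputable def xiVal (p : ℝ) (b : Bool) : ℝ :=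
  if b then Real.sqrt ((1 - p) / p) else -Real.sqrt (p / (1 - p))

/-- The probability weight: `true` (the value `√((1−p)/p)`) has probability `p`,
`false` (the value `−√(p/(1−p))`) has probability `1 − p`. -/
def wt (p : ℝ) (b : Bool) : ℝ := if b then p else 1 - p

/-- `𝔼|∑_{j=1}^n λ_j ξ_j|` for i.i.d. `ξ_1, …, ξ_n` associated with `p`, written as the
explicit expectation over the product space `Bool^n`. -/
noncomputable def expAbsSum (p : ℝ) (n : ℕ) (l : Fin n → ℝ) : ℝ :=
  ∑ σ : Fin n → Bool, (∏ j, wt p (σ j)) * |∑ j, l j * xiVal p (σ j)|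

open Finset

lemma wt_nonneg' (b : Bool) : 0 ≤ wt (3/4) b := by cases b <;> norm_num [wt]

lemma sum_prod_comm' (n : ℕ) (g : Fin n → Bool → ℝ) :
    ∑ σ : Fin n → Bool, ∏ j, g j (σ j) = ∏ j, ∑ b, g j b := by
  rw [Finset.prod_univ_sum, Fintype.piFinset_univ]

lemma exp_prod' (n : ℕ) (f : Fin n → Bool → ℝ) :
    ∑ σ : Fin n → Bool, (∏ j, wt (3/4) (σ j)) * ∏ j, f j (σ j)
      = ∏ j, ∑ b, wt (3/4) b * f j b := by
  rw [← sum_prod_comm' n (fun j b => wt (3/4) b * f j b)]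
  exact Finset.sum_congr rfl fun σ _ => (Finset.prod_mul_distrib).symm

lemma xi_true : xiVal (3/4) true = Real.sqrt 3 / 3 := by
  rw [xiVal, if_pos rfl, show (1 - 3/4 : ℝ) / (3/4) = 3/9 by norm_num,
    Real.sqrt_div (by norm_num : (0:ℝ) ≤ 3), show (9:ℝ) = 3^2 by norm_num,
    Real.sqrt_sq (by norm_num)]

lemma xi_false : xiVal (3/4) false = -Real.sqrt 3 := by
  rw [xiVal, if_neg (by simp), show (3/4 : ℝ) / (1 - 3/4) = 3 by norm_num]

lemma wtsum : ∑ b, wt (3/4) b = (1:ℝ) := by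
  rw [Fintype.sum_bool]; norm_num [wt]

lemma mom0 : ∑ b, wt (3/4) b * (1:ℝ) = 1 := by
  simp only [mul_one]; exact wtsum

lemma mom1 : ∑ b, wt (3/4) b * xiVal (3/4) b = 0 := by
  rw [Fintype.sum_bool, xi_true, xi_false]
  simp only [wt]
  norm_num; ring

lemma mom2 : ∑ b, wt (3/4) b * (xiVal (3/4) b * xiVal (3/4) b) = 1 := by
  have h3 : Real.sqrt 3 * Real.sqrt 3 = 3 := Real.mul_self_sqrt (by norm_num)
  rw [Fintype.sum_bool, xi_true, xi_false]
  simp only [wt]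
  norm_num
  nlinarith [h3]

lemma momabs : ∑ b, wt (3/4) b * |xiVal (3/4) b| = Real.sqrt 3 / 2 := by
  have h0 : (0:ℝ) ≤ Real.sqrt 3 := Real.sqrt_nonneg 3
  rw [Fintype.sum_bool, xi_true, xi_false]
  simp only [wt]
  rw [abs_of_nonneg (by positivity), abs_neg, abs_of_nonneg h0]
  norm_num; ring

lemma exp_single' (n : ℕ) (k : Fin n) (g : Bool → ℝ) :
    ∑ σ : Fin n → Bool, (∏ j, wt (3/4) (σ j)) * g (σ k)
      = ∑ b, wt (3/4) b * g b := by
  have h := exp_prod' n (fun j b => if j = k then g b else 1)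
  have hL : ∀ σ : Fin n → Bool,
      (∏ j, if j = k then g (σ j) else 1) = g (σ k) := by
    intro σ; simp [Finset.prod_ite_eq']
  have hR : ∀ j : Fin n,
      (∑ b, wt (3/4) b * (if j = k then g b else 1))
        = if j = k then ∑ b, wt (3/4) b * g b else 1 := by
    intro j
    by_cases hj : j = k
    · simp [hj]
    · simp only [if_neg hj, mul_one]
      rw [wtsum]
  rw [Finset.sum_congr rfl (fun σ _ => by rw [hL σ])] at h
  rw [h, Finset.prod_congr rfl (fun j _ => hR j)]
  simp [Finset.prod_ite_eq']

lemma cov' (n : ℕ) (i j : Fin n) :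
    ∑ σ : Fin n → Bool, (∏ j', wt (3/4) (σ j'))
        * (xiVal (3/4) (σ i) * xiVal (3/4) (σ j))
      = if i = j then 1 else 0 := by
  have h := exp_prod' n
    (fun j' b => (if j' = i then xiVal (3/4) b else 1) * (if j' = j then xiVal (3/4) b else 1))
  have hL : ∀ σ : Fin n → Bool,
      (∏ j', (if j' = i then xiVal (3/4) (σ j') else 1)
        * (if j' = j then xiVal (3/4) (σ j') else 1))
        = xiVal (3/4) (σ i) * xiVal (3/4) (σ j) := by
    intro σ
    rw [Finset.prod_mul_distrib]
    simp [Finset.prod_ite_eq']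
  rw [Finset.sum_congr rfl (fun σ _ => by rw [hL σ])] at h
  rw [h]
  by_cases hij : i = j
  · subst hij
    have hfac : ∀ j' : Fin n,
        (∑ b, wt (3/4) b * ((if j' = i then xiVal (3/4) b else 1)
          * (if j' = i then xiVal (3/4) b else 1)))
          = if j' = i then 1 else 1 := by
      intro j'
      by_cases hj : j' = i
      · rw [hj]; simp only [eq_self_iff_true, if_true, ite_self]; exact mom2
      · simp only [if_neg hj, mul_one, one_mul]; rw [wtsum]
    rw [Finset.prod_congr rfl (fun j' _ => hfac j')]
    simp
  · rw [if_neg hij]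
    apply Finset.prod_eq_zero (Finset.mem_univ i)
    simp only [if_pos rfl, if_neg hij]
    simpa using mom1

/-- Let `p = 3/4`.  For every `n ≥ 1` and every unit vector `λ ∈ ℝ^n` with
`max_k λ_k² ≥ 0.99`, one has
`𝔼|∑ λ_j ξ_j| ≤ 2√((1−p)p) + √(1 − max_k λ_k²) ≤ √3/2 + 1/10 < 0.97`. -/
theorem khinchine_deficit_concentrated_case :
    ∀ n : ℕ, 1 ≤ n → ∀ l : Fin n → ℝ, (∑ j, (l j) ^ 2) = 1 →
      (0.99 : ℝ) ≤ (⨆ k, (l k) ^ 2) →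
      expAbsSum (3 / 4) n l
          ≤ 2 * Real.sqrt ((1 - 3 / 4) * (3 / 4)) + Real.sqrt (1 - ⨆ k, (l k) ^ 2) ∧
        2 * Real.sqrt ((1 - 3 / 4) * (3 / 4)) + Real.sqrt (1 - ⨆ k, (l k) ^ 2)
          ≤ Real.sqrt 3 / 2 + 1 / 10 ∧
        Real.sqrt 3 / 2 + 1 / 10 < 0.97 := by
  intro n hn l hsum hsup
  have hne : Nonempty (Fin n) := ⟨⟨0, hn⟩⟩
  obtain ⟨k, hk⟩ := Finite.exists_max (fun j => l j ^ 2)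
  have hbdd : BddAbove (Set.range fun j => l j ^ 2) :=
    Set.Finite.bddAbove (Set.finite_range _)
  have hsupeq : (⨆ j, l j ^ 2) = l k ^ 2 :=
    le_antisymm (ciSup_le hk) (le_ciSup hbdd k)
  have hlk1 : l k ^ 2 ≤ 1 := by
    rw [← hsum]
    exact Finset.single_le_sum (fun j _ => sq_nonneg (l j)) (Finset.mem_univ k)
  have hsqrt3 : Real.sqrt 3 * Real.sqrt 3 = 3 := Real.mul_self_sqrt (by norm_num)
  have h316 : Real.sqrt ((1 - 3/4 : ℝ) * (3/4)) = Real.sqrt 3 / 4 := by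
    rw [show (1 - 3/4 : ℝ) * (3/4) = 3/16 by norm_num,
      Real.sqrt_div (by norm_num : (0:ℝ) ≤ 3), show (16:ℝ) = 4^2 by norm_num,
      Real.sqrt_sq (by norm_num)]
  -- set up notation
  set w : (Fin n → Bool) → ℝ := fun σ => ∏ j, wt (3/4) (σ j) with hw
  have hwnn : ∀ σ, 0 ≤ w σ := fun σ => Finset.prod_nonneg fun j _ => wt_nonneg' (σ j)
  set L : Fin n → ℝ := fun j => if j = k then 0 else l j with hL
  set T : (Fin n → Bool) → ℝ := fun σ => ∑ j, L j * xiVal (3/4) (σ j) with hT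
  -- decomposition
  have hdecomp : ∀ σ : Fin n → Bool,
      (∑ j, l j * xiVal (3/4) (σ j)) = l k * xiVal (3/4) (σ k) + T σ := by
    intro σ
    have : ∀ j : Fin n, l j * xiVal (3/4) (σ j)
        = (if j = k then l j * xiVal (3/4) (σ j) else 0) + L j * xiVal (3/4) (σ j) := by
      intro j; by_cases hj : j = k <;> simp [hL, hj]
    rw [Finset.sum_congr rfl fun j _ => this j, Finset.sum_add_distrib,
      Finset.sum_ite_eq' Finset.univ k (fun j => l j * xiVal (3/4) (σ j))]
    simp [hT]
  -- triangle inequality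
  have step1 : expAbsSum (3/4) n l
      ≤ (∑ σ : Fin n → Bool, w σ * |l k * xiVal (3/4) (σ k)|)
        + ∑ σ : Fin n → Bool, w σ * |T σ| := by
    rw [expAbsSum, ← Finset.sum_add_distrib]
    apply Finset.sum_le_sum
    intro σ _
    rw [← mul_add]
    exact mul_le_mul_of_nonneg_left
      (by rw [hdecomp σ]; exact abs_add_le _ _) (hwnn σ)
  -- first term
  have hA : (∑ σ : Fin n → Bool, w σ * |l k * xiVal (3/4) (σ k)|)
      = |l k| * (Real.sqrt 3 / 2) := by
    rw [← momabs, ← exp_single' n k (fun b => |xiVal (3/4) b|), Finset.mul_sum]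
    exact Finset.sum_congr rfl fun σ _ => by rw [abs_mul]; ring
  have hlkabs : |l k| ≤ 1 := by
    have h1 : |l k| ^ 2 ≤ 1 := by rw [sq_abs]; exact hlk1
    nlinarith [abs_nonneg (l k)]
  have hA' : (∑ σ : Fin n → Bool, w σ * |l k * xiVal (3/4) (σ k)|)
      ≤ Real.sqrt 3 / 2 := by
    rw [hA]
    exact mul_le_of_le_one_left (by positivity) hlkabs
  -- total mass
  have hw1 : ∑ σ : Fin n → Bool, w σ = 1 := by
    have h := exp_single' n k (fun _ => (1:ℝ))
    simp only [mul_one] at h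
    rw [wtsum] at h
    exact h
  -- variance of T
  have hsumL : ∑ j, L j ^ 2 = 1 - l k ^ 2 := by
    have : ∀ j : Fin n, L j ^ 2 = l j ^ 2 - (if j = k then l k ^ 2 else 0) := by
      intro j; by_cases hj : j = k <;> simp [hL, hj]
    rw [Finset.sum_congr rfl fun j _ => this j, Finset.sum_sub_distrib, hsum,
      Finset.sum_ite_eq' Finset.univ k (fun _ => l k ^ 2)]
    simp
  have hvar : ∑ σ : Fin n → Bool, w σ * (T σ) ^ 2 = 1 - l k ^ 2 := by
    have hTexp : ∀ σ : Fin n → Bool, (T σ) ^ 2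
        = ∑ i, ∑ j, (L i * L j) * (xiVal (3/4) (σ i) * xiVal (3/4) (σ j)) := by
      intro σ
      rw [hT, sq, Finset.sum_mul_sum]
      exact Finset.sum_congr rfl fun i _ => Finset.sum_congr rfl fun j _ => by ring
    calc ∑ σ : Fin n → Bool, w σ * (T σ) ^ 2
        = ∑ σ : Fin n → Bool, ∑ i, ∑ j, (L i * L j)
            * (w σ * (xiVal (3/4) (σ i) * xiVal (3/4) (σ j))) := by
          refine Finset.sum_congr rfl fun σ _ => ?_
          rw [hTexp σ, Finset.mul_sum]
          exact Finset.sum_congr rfl fun i _ => by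
            rw [Finset.mul_sum]; exact Finset.sum_congr rfl fun j _ => by ring
      _ = ∑ i, ∑ j, (L i * L j)
            * ∑ σ : Fin n → Bool, w σ * (xiVal (3/4) (σ i) * xiVal (3/4) (σ j)) := by
          rw [Finset.sum_comm]
          refine Finset.sum_congr rfl fun i _ => ?_
          rw [Finset.sum_comm]
          exact Finset.sum_congr rfl fun j _ => by rw [Finset.mul_sum]
      _ = ∑ i, ∑ j, (L i * L j) * (if i = j then 1 else 0) := by
          exact Finset.sum_congr rfl fun i _ => Finset.sum_congr rfl fun j _ => by
            rw [cov' n i j]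
      _ = ∑ i, L i ^ 2 := by
          refine Finset.sum_congr rfl fun i _ => ?_
          simp [mul_ite, mul_zero, Finset.sum_ite_eq, sq]
      _ = 1 - l k ^ 2 := hsumL
  -- Cauchy–Schwarz
  have hB : (∑ σ : Fin n → Bool, w σ * |T σ|) ≤ Real.sqrt (1 - l k ^ 2) := by
    have hcs := Finset.sum_mul_sq_le_sq_mul_sq Finset.univ
      (fun σ : Fin n → Bool => Real.sqrt (w σ))
      (fun σ : Fin n → Bool => Real.sqrt (w σ) * |T σ|)
    have h1 : ∀ σ : Fin n → Bool,
        Real.sqrt (w σ) * (Real.sqrt (w σ) * |T σ|) = w σ * |T σ| := by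
      intro σ; rw [← mul_assoc, Real.mul_self_sqrt (hwnn σ)]
    have h2 : ∀ σ : Fin n → Bool, Real.sqrt (w σ) ^ 2 = w σ :=
      fun σ => Real.sq_sqrt (hwnn σ)
    have h3 : ∀ σ : Fin n → Bool,
        (Real.sqrt (w σ) * |T σ|) ^ 2 = w σ * (T σ) ^ 2 := by
      intro σ; rw [mul_pow, Real.sq_sqrt (hwnn σ), sq_abs]
    rw [Finset.sum_congr rfl fun σ _ => h1 σ, Finset.sum_congr rfl fun σ _ => h2 σ,
      Finset.sum_congr rfl fun σ _ => h3 σ, hw1, hvar, one_mul] at hcs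
    have hBnn : 0 ≤ ∑ σ : Fin n → Bool, w σ * |T σ| :=
      Finset.sum_nonneg fun σ _ => mul_nonneg (hwnn σ) (abs_nonneg _)
    exact (Real.le_sqrt hBnn (by linarith)).mpr hcs
  refine ⟨?_, ?_, ?_⟩
  · calc expAbsSum (3/4) n l
        ≤ Real.sqrt 3 / 2 + Real.sqrt (1 - l k ^ 2) := by
          refine step1.trans (add_le_add hA' hB)
      _ = 2 * Real.sqrt ((1 - 3/4) * (3/4)) + Real.sqrt (1 - ⨆ j, l j ^ 2) := by
          rw [h316, hsupeq]; ring
  · have hle : Real.sqrt (1 - ⨆ j, l j ^ 2) ≤ 1/10 := by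
      rw [show (1/10 : ℝ) = Real.sqrt ((1/10)^2) by rw [Real.sqrt_sq]; norm_num]
      apply Real.sqrt_le_sqrt
      norm_num
      linarith
    rw [h316]
    linarith
  · have : Real.sqrt 3 < 1.74 := by
      rw [show (1.74:ℝ) = Real.sqrt (1.74^2) by rw [Real.sqrt_sq]; norm_num]
      exact Real.sqrt_lt_sqrt (by norm_num) (by norm_num)
    norm_num
    linarith
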